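/- Let X be a compact Hausdorff topological space, let f ⊆ X × X be a closed relation on X, and let B ⊆ X be an attractor block for f. Then B is a neighborhood of the omega limit set ω(B; f), and ω(B; f) is an attractor for f. -/
import Mathlib


/-- The image of a set `S` under a relation `f ⊆ X × X`. -/
def relImage {X : Type*} (f : Set (X × X)) (S : Set X) : Set X :=
  {y | ∃ x ∈ S, (x, y) ∈ f}

/-- Composition of relations: `relComp g f = {(x,z) | ∃ y, (x,y) ∈ f ∧ (y,z) ∈ g}`. -/
def relComp {X : Type*} (g f : Set (X × X)) : Set (X × X) :=
  {p | ∃ y, (p.1, y) ∈ f ∧ (y, p.2) ∈ g}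

/-- Iterates of a relation: `f⁰ = id`, `fⁿ⁺¹ = f ∘ fⁿ`. -/
def relIter {X : Type*} (f : Set (X × X)) : ℕ → Set (X × X)
  | 0 => {p | p.1 = p.2}
  | n + 1 => relComp f (relIter f n)

/-- A set `K` is confining for `f` if `f(K) ⊆ K`. -/
def Confining {X : Type*} (f : Set (X × X)) (K : Set X) : Prop :=
  relImage f K ⊆ K

/-- The omega limit set `ω(S; f)`: the intersection of all closed confining sets `K`
with `fⁿ(S) ⊆ K` for some `n ≥ 0`. -/
def relOmegaLimit {X : Type*} [TopologicalSpace X] (f : Set (X × X)) (S : Set X) : Set X :=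
  ⋂₀ {K | IsClosed K ∧ Confining f K ∧ ∃ n : ℕ, relImage (relIter f n) S ⊆ K}

/-- `B` is an attractor block for `f` if `f(closure B) ⊆ interior B`. -/
def IsAttractorBlock {X : Type*} [TopologicalSpace X] (f : Set (X × X)) (B : Set X) : Prop :=
  relImage f (closure B) ⊆ interior B

/-- `A` is an attractor for `f` if `f(A) = A` and there is a neighborhood `U` of `A`
with `ω(U; f) = A`. -/
def IsAttractor {X : Type*} [TopologicalSpace X] (f : Set (X × X)) (A : Set X) : Prop :=
  relImage f A = A ∧ ∃ U ∈ nhdsSet A, relOmegaLimit f U = A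

namespace AttrAux
variable {X : Type*}

theorem relImage_mono (g : Set (X × X)) {S T : Set X} (h : S ⊆ T) :
    relImage g S ⊆ relImage g T := fun _ ⟨x, hx, hxy⟩ => ⟨x, h hx, hxy⟩

theorem relImage_zero (f : Set (X × X)) (S : Set X) : relImage (relIter f 0) S = S := by
  ext y
  constructor
  · rintro ⟨x, hx, h⟩
    have : x = y := h
    exact this ▸ hx
  · intro hy; exact ⟨y, hy, rfl⟩

theorem relImage_succ (f : Set (X × X)) (n : ℕ) (S : Set X) :
    relImage (relIter f (n + 1)) S = relImage f (relImage (relIter f n) S) := by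
  ext y
  constructor
  · rintro ⟨x, hx, m, hm1, hm2⟩
    exact ⟨m, ⟨x, hx, hm1⟩, hm2⟩
  · rintro ⟨m, ⟨x, hx, hm1⟩, hm2⟩
    exact ⟨x, hx, m, hm1, hm2⟩

theorem isCompact_relImage [TopologicalSpace X] [CompactSpace X] [T2Space X]
    {f : Set (X × X)} (hf : IsClosed f) {K : Set X} (hK : IsCompact K) :
    IsCompact (relImage f K) := by
  have h1 : IsClosed (f ∩ K ×ˢ (Set.univ : Set X)) :=
    hf.inter (hK.isClosed.prod isClosed_univ)
  have h3 : relImage f K = Prod.snd '' (f ∩ K ×ˢ (Set.univ : Set X)) := by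
    ext y
    constructor
    · rintro ⟨x, hx, hxy⟩
      exact ⟨(x, y), ⟨hxy, hx, trivial⟩, rfl⟩
    · rintro ⟨⟨x, y'⟩, ⟨hxy, hx, -⟩, rfl⟩
      exact ⟨x, hx, hxy⟩
  rw [h3]
  exact h1.isCompact.image continuous_snd

theorem iter_subset {f : Set (X × X)} {K B : Set X} (hc : Confining f K) {n : ℕ}
    (h : relImage (relIter f n) B ⊆ K) {m : ℕ} (hnm : n ≤ m) :
    relImage (relIter f m) B ⊆ K := by
  obtain ⟨k, rfl⟩ := Nat.exists_eq_add_of_le hnm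
  induction k with
  | zero => simpa using h
  | succ k ih =>
    rw [show n + (k + 1) = (n + k) + 1 from rfl, relImage_succ]
    exact (relImage_mono f (ih (Nat.le_add_right _ _))).trans hc

end AttrAux

/-- If `f` is a closed relation on a compact Hausdorff space and `B` is an attractor
block for `f`, then `B` is a neighborhood of `ω(B; f)` and `ω(B; f)` is an attractor. -/
theorem attractorBlock_relOmegaLimit {X : Type*} [TopologicalSpace X]
    [CompactSpace X] [T2Space X] (f : Set (X × X)) (hf : IsClosed f)
    (B : Set X) (hB : IsAttractorBlock f B) :
    B ∈ nhdsSet (relOmegaLimit f B) ∧ IsAttractor f (relOmegaLimit f B) := by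
  classical
  set 𝒦 : Set (Set X) :=
    {K | IsClosed K ∧ Confining f K ∧ ∃ n : ℕ, relImage (relIter f n) B ⊆ K} with h𝒦
  have hω : relOmegaLimit f B = ⋂₀ 𝒦 := rfl
  set C₁ : Set X := relImage f (closure B) with hC₁def
  have hC₁c : IsCompact C₁ := AttrAux.isCompact_relImage hf isClosed_closure.isCompact
  have hC₁int : C₁ ⊆ interior B := hB
  have hC₁sub : C₁ ⊆ closure B :=
    hC₁int.trans (interior_subset.trans subset_closure)
  have hC₁conf : Confining f C₁ := AttrAux.relImage_mono f hC₁sub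
  have hfB1 : relImage (relIter f 1) B ⊆ C₁ := by
    rw [show (1 : ℕ) = 0 + 1 from rfl, AttrAux.relImage_succ, AttrAux.relImage_zero]
    exact AttrAux.relImage_mono f subset_closure
  have hC₁mem : C₁ ∈ 𝒦 := ⟨hC₁c.isClosed, hC₁conf, 1, hfB1⟩
  have hωC₁ : relOmegaLimit f B ⊆ C₁ := by
    rw [hω]; exact Set.sInter_subset_of_mem hC₁mem
  have hpart1 : B ∈ nhdsSet (relOmegaLimit f B) := by
    rw [← subset_interior_iff_mem_nhdsSet]
    exact hωC₁.trans hC₁int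
  -- intersections stay in 𝒦
  have hinter : ∀ K ∈ 𝒦, ∀ K' ∈ 𝒦, K ∩ K' ∈ 𝒦 := by
    rintro K ⟨hKc, hKf, n, hKn⟩ K' ⟨hK'c, hK'f, n', hK'n⟩
    refine ⟨hKc.inter hK'c, ?_, max n n', ?_⟩
    · rintro y ⟨x, hx, hxy⟩
      exact ⟨hKf ⟨x, hx.1, hxy⟩, hK'f ⟨x, hx.2, hxy⟩⟩
    · exact Set.subset_inter (AttrAux.iter_subset hKf hKn (le_max_left _ _))
        (AttrAux.iter_subset hK'f hK'n (le_max_right _ _))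
  -- images of intersections with C₁ stay in 𝒦
  have himg : ∀ K ∈ 𝒦, relImage f (K ∩ C₁) ∈ 𝒦 := by
    intro K hK
    obtain ⟨hKc, hKf, n, hKn⟩ := hinter K hK C₁ hC₁mem
    refine ⟨(AttrAux.isCompact_relImage hf hKc.isCompact).isClosed,
      AttrAux.relImage_mono f hKf, n + 1, ?_⟩
    rw [AttrAux.relImage_succ]
    exact AttrAux.relImage_mono f hKn
  -- f(ω) ⊆ ω
  have hfwd : relImage f (relOmegaLimit f B) ⊆ relOmegaLimit f B := by
    rintro y ⟨x, hx, hxy⟩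
    rw [hω]
    intro K hK
    exact hK.2.1 ⟨x, (hω ▸ hx) K hK, hxy⟩
  -- ω ⊆ f(ω)
  have hback : relOmegaLimit f B ⊆ relImage f (relOmegaLimit f B) := by
    intro a ha
    have hanonempty : ∀ K ∈ 𝒦, ({x | (x, a) ∈ f} ∩ K).Nonempty := by
      intro K hK
      have ha' : a ∈ relImage f (K ∩ C₁) := (hω ▸ ha) _ (himg K hK)
      obtain ⟨x, hx, hxa⟩ := ha'
      exact ⟨x, hxa, hx.1⟩
    have hPclosed : IsClosed {x : X | (x, a) ∈ f} :=
      hf.preimage (continuous_id.prodMk continuous_const)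
    haveI : Nonempty 𝒦 := ⟨⟨C₁, hC₁mem⟩⟩
    obtain ⟨x, hx⟩ :=
      IsCompact.nonempty_iInter_of_directed_nonempty_isCompact_isClosed
        (fun K : 𝒦 => {x | (x, a) ∈ f} ∩ K)
        (fun K K' => ⟨⟨K ∩ K', hinter K.1 K.2 K'.1 K'.2⟩,
          Set.inter_subset_inter_right _ Set.inter_subset_left,
          Set.inter_subset_inter_right _ Set.inter_subset_right⟩)
        (fun K => hanonempty K.1 K.2)
        (fun K => (hPclosed.inter K.2.1).isCompact)
        (fun K => hPclosed.inter K.2.1)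
    simp only [Set.mem_iInter, Set.mem_inter_iff] at hx
    refine ⟨x, ?_, (hx ⟨C₁, hC₁mem⟩).1⟩
    rw [hω]
    intro K hK
    exact (hx ⟨K, hK⟩).2
  exact ⟨hpart1, ⟨Set.Subset.antisymm hfwd hback, B, hpart1, rfl⟩⟩
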